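/- Let r ∈ ℓ²(2ℤ) with r(k) ≥ 0 and define σ₂(n,2;m) = ∑_{j_2 ≠ ±n} |n²−j_2²|^{-1} ∑_{j_1 ≠ ±n} r(m+j_1) r(j_1+j_2), indices in n+2ℤ. Then σ₂(n,2;m) ≤ ‖r‖² · (2 log 6n)/n for every n ∈ ℕ and m ∈ n+2ℤ. -/

import Mathlib

open scoped BigOperators

noncomputable section

def Hsum (n : ℕ) : ℝ := ∑ i ∈ Finset.range n, 1/((i:ℝ)+1)

lemma Hsum_nonneg (n : ℕ) : 0 ≤ Hsum n :=
  Finset.sum_nonneg (fun i _ => by positivity)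

lemma Hsum_mono {a b : ℕ} (h : a ≤ b) : Hsum a ≤ Hsum b :=
  Finset.sum_le_sum_of_subset_of_nonneg (Finset.range_subset_range.2 h) (fun i _ _ => by positivity)

lemma Hsum_le (n : ℕ) : Hsum n ≤ 1 + Real.log n := by
  have h := harmonic_le_one_add_log n
  have e : (harmonic n : ℝ) = Hsum n := by
    unfold Hsum harmonic
    push_cast
    simp [one_div]
  linarith

lemma partial_tail (n : ℕ) (N : ℕ) :
    ∑ j ∈ Finset.range N, (1/((j:ℝ)+1) - 1/((j:ℝ)+1+n)) ≤ Hsum n := by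
  have h2 : ∑ j ∈ Finset.range N, 1/((j:ℝ)+1+n) = ∑ i ∈ Finset.Ico n (N+n), 1/((i:ℝ)+1) := by
    rw [Finset.sum_Ico_eq_sum_range]
    simp only [add_tsub_cancel_right]
    apply Finset.sum_congr rfl
    intro j _
    push_cast
    ring_nf
  rw [Finset.sum_sub_distrib, h2]
  rcases le_total N n with h | h
  · have h1 : ∑ j ∈ Finset.range N, 1/((j:ℝ)+1) ≤ Hsum n := Hsum_mono h
    have h3 : 0 ≤ ∑ i ∈ Finset.Ico n (N+n), 1/((i:ℝ)+1) :=
      Finset.sum_nonneg (fun i _ => by positivity)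
    linarith
  · have split : ∑ j ∈ Finset.range N, 1/((j:ℝ)+1)
        = Hsum n + ∑ i ∈ Finset.Ico n N, 1/((i:ℝ)+1) := by
      rw [Finset.range_eq_Ico, ← Finset.sum_Ico_consecutive _ (Nat.zero_le n) h]
      rw [Hsum, Finset.range_eq_Ico]
    have hsub : ∑ i ∈ Finset.Ico n N, 1/((i:ℝ)+1) ≤ ∑ i ∈ Finset.Ico n (N+n), 1/((i:ℝ)+1) :=
      Finset.sum_le_sum_of_subset_of_nonneg
        (Finset.Ico_subset_Ico le_rfl (Nat.le_add_right N n)) (fun i _ _ => by positivity)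
    linarith

lemma tail_real (n : ℕ) (hn : 1 ≤ n) (N : ℕ) :
    ∑ i ∈ Finset.range N, 1/(4*((i:ℝ)+1)*((i:ℝ)+1+n)) ≤ Hsum n/(4*n) := by
  have hn0 : (0:ℝ) < n := by exact_mod_cast hn
  have key : ∀ i : ℕ, 1/(4*((i:ℝ)+1)*((i:ℝ)+1+n))
      = (1/(4*n)) * (1/((i:ℝ)+1) - 1/((i:ℝ)+1+n)) := by
    intro i
    have h1 : (0:ℝ) < (i:ℝ)+1 := by positivity
    have h2 : (0:ℝ) < (i:ℝ)+1+n := by positivity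
    field_simp
    ring
  calc ∑ i ∈ Finset.range N, 1/(4*((i:ℝ)+1)*((i:ℝ)+1+n))
      = (1/(4*n)) * ∑ i ∈ Finset.range N, (1/((i:ℝ)+1) - 1/((i:ℝ)+1+n)) := by
        rw [Finset.mul_sum]; exact Finset.sum_congr rfl (fun i _ => key i)
    _ ≤ (1/(4*n)) * Hsum n := by
        apply mul_le_mul_of_nonneg_left (partial_tail n N) (by positivity)
    _ = Hsum n/(4*n) := by ring

lemma tail_tsum (n : ℕ) (hn : 1 ≤ n) :
    (∑' i : ℕ, ENNReal.ofReal (1/(4*((i:ℝ)+1)*((i:ℝ)+1+n)))) ≤ ENNReal.ofReal (Hsum n/(4*n)) := by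
  rw [ENNReal.tsum_eq_iSup_sum]
  apply iSup_le
  intro s
  obtain ⟨N, hN⟩ := Finset.exists_nat_subset_range s
  calc ∑ i ∈ s, ENNReal.ofReal (1/(4*((i:ℝ)+1)*((i:ℝ)+1+n)))
      ≤ ∑ i ∈ Finset.range N, ENNReal.ofReal (1/(4*((i:ℝ)+1)*((i:ℝ)+1+n))) :=
        Finset.sum_le_sum_of_subset hN
    _ = ENNReal.ofReal (∑ i ∈ Finset.range N, 1/(4*((i:ℝ)+1)*((i:ℝ)+1+n))) :=
        (ENNReal.ofReal_sum_of_nonneg (fun i _ => by positivity)).symm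
    _ ≤ _ := ENNReal.ofReal_le_ofReal (tail_real n hn N)

lemma middle_sum (n : ℕ) (hn : 1 ≤ n) :
    ∑ i ∈ Finset.range (n-1), 1/(4*((i:ℝ)+1)*((n:ℝ)-((i:ℝ)+1))) ≤ Hsum n/(2*n) := by
  have hn0 : (0:ℝ) < n := by exact_mod_cast hn
  have key : ∀ i ∈ Finset.range (n-1), 1/(4*((i:ℝ)+1)*((n:ℝ)-((i:ℝ)+1)))
      = (1/(4*n)) * (1/((i:ℝ)+1) + 1/((n:ℝ)-((i:ℝ)+1))) := by
    intro i hi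
    have hi' : i < n - 1 := Finset.mem_range.1 hi
    have h1 : (0:ℝ) < (i:ℝ)+1 := by positivity
    have h2 : (0:ℝ) < (n:ℝ)-((i:ℝ)+1) := by
      have : (i:ℝ) + 2 ≤ (n:ℝ) := by exact_mod_cast Nat.succ_le_of_lt (by omega)
      linarith
    field_simp
    ring
  rw [Finset.sum_congr rfl key, ← Finset.mul_sum]
  have hrefl : ∑ i ∈ Finset.range (n-1), 1/((n:ℝ)-((i:ℝ)+1))
      = ∑ i ∈ Finset.range (n-1), 1/((i:ℝ)+1) := by
    rw [← Finset.sum_range_reflect (fun i => 1/((i:ℝ)+1)) (n-1)]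
    apply Finset.sum_congr rfl
    intro j hj
    have hj' : j < n - 1 := Finset.mem_range.1 hj
    congr 1
    have he : n - 1 - 1 - j = n - (2 + j) := by omega
    have : ((n - 1 - 1 - j : ℕ) : ℝ) = (n:ℝ) - 2 - j := by
      rw [he, Nat.cast_sub (by omega)]
      push_cast; ring
    rw [this]; ring
  rw [Finset.sum_add_distrib, hrefl]
  have hH : ∑ i ∈ Finset.range (n-1), 1/((i:ℝ)+1) ≤ Hsum n := Hsum_mono (by omega)
  calc (1/(4*(n:ℝ))) * (∑ i ∈ Finset.range (n-1), 1/((i:ℝ)+1) + ∑ i ∈ Finset.range (n-1), 1/((i:ℝ)+1))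
      ≤ (1/(4*n)) * (Hsum n + Hsum n) := by
        apply mul_le_mul_of_nonneg_left (by linarith) (by positivity)
    _ = Hsum n/(2*n) := by ring

set_option maxHeartbeats 1000000 in
lemma weight_bound (n : ℕ) (hn : 1 ≤ n) :
    (∑' j2 : {j : ℤ // j % 2 = (n : ℤ) % 2 ∧ j ≠ (n : ℤ) ∧ j ≠ -(n : ℤ)},
      ENNReal.ofReal (1 / |(n : ℝ) ^ 2 - ((j2.1 : ℤ) : ℝ) ^ 2|))
    ≤ ENNReal.ofReal (2 * Real.log (6 * n) / n) := by
  have hn0 : (0:ℝ) < n := by exact_mod_cast hn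
  -- the reindexing equivalence k ↦ n - 2k
  set e : {k : ℤ // k ≠ 0 ∧ k ≠ (n:ℤ)} ≃
      {j : ℤ // j % 2 = (n : ℤ) % 2 ∧ j ≠ (n : ℤ) ∧ j ≠ -(n : ℤ)} :=
    { toFun := fun k => ⟨(n:ℤ) - 2*k.1, by
        have h1 := k.2.1; have h2 := k.2.2; omega⟩
      invFun := fun j => ⟨((n:ℤ) - j.1)/2, by
        have h0 := j.2.1; have h1 := j.2.2.1; have h2 := j.2.2.2
        refine ⟨by omega, by omega⟩⟩
      left_inv := fun k => Subtype.ext (by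
        show ((n:ℤ) - ((n:ℤ) - 2*k.1))/2 = k.1
        omega)
      right_inv := fun j => Subtype.ext (by
        have h0 := j.2.1
        show (n:ℤ) - 2*(((n:ℤ) - j.1)/2) = j.1
        omega) } with he
  rw [← Equiv.tsum_eq e (fun j2 => ENNReal.ofReal (1 / |(n : ℝ) ^ 2 - ((j2.1 : ℤ) : ℝ) ^ 2|))]
  have step1 : ∀ k : {k : ℤ // k ≠ 0 ∧ k ≠ (n:ℤ)},
      ENNReal.ofReal (1 / |(n : ℝ) ^ 2 - (((e k).1 : ℤ) : ℝ) ^ 2|)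
      = ENNReal.ofReal (1 / |4*((k.1:ℤ):ℝ)*((n:ℝ) - ((k.1:ℤ):ℝ))|) := by
    intro k
    congr 2
    have : (((e k).1 : ℤ) : ℝ) = (n:ℝ) - 2*((k.1:ℤ):ℝ) := by
      simp [he]
    rw [this]
    ring_nf
  rw [tsum_congr step1]
  -- pass to a sum over ℤ with indicator
  set S : Set ℤ := {k | k ≠ 0 ∧ k ≠ (n:ℤ)} with hS
  set g : ℤ → ENNReal := fun k => ENNReal.ofReal (1 / |4*((k:ℤ):ℝ)*((n:ℝ) - ((k:ℤ):ℝ))|) with hg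
  have hsub : (∑' k : {k : ℤ // k ≠ 0 ∧ k ≠ (n:ℤ)}, g k.1) = ∑' k : ℤ, S.indicator g k :=
    tsum_subtype S g
  rw [show (∑' k : {k : ℤ // k ≠ 0 ∧ k ≠ (n:ℤ)},
      ENNReal.ofReal (1 / |4*((k.1:ℤ):ℝ)*((n:ℝ) - ((k.1:ℤ):ℝ))|)) = ∑' k : ℤ, S.indicator g k
    from hsub]
  -- three pieces
  set g1 : ℤ → ENNReal := fun k => if 1 ≤ k ∧ k ≤ (n:ℤ)-1 then g k else 0 with hg1
  set g2 : ℤ → ENNReal := fun k => if (n:ℤ)+1 ≤ k then g k else 0 with hg2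
  set g3 : ℤ → ENNReal := fun k => if k ≤ -1 then g k else 0 with hg3
  have hpoint : ∀ k : ℤ, S.indicator g k ≤ g1 k + g2 k + g3 k := by
    intro k
    by_cases hk : k ∈ S
    · rw [Set.indicator_of_mem hk]
      have hk' : k ≠ 0 ∧ k ≠ (n:ℤ) := hk
      have hcase : (1 ≤ k ∧ k ≤ (n:ℤ)-1) ∨ ((n:ℤ)+1 ≤ k) ∨ (k ≤ -1) := by omega
      rcases hcase with h | h | h
      · have e1 : g1 k = g k := if_pos h
        have h2 : ¬((n:ℤ)+1 ≤ k) := by omega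
        have h3 : ¬(k ≤ -1) := by omega
        rw [hg2, hg3]
        simp only [if_neg h2, if_neg h3, add_zero]
        rw [e1]
      · have e2 : g2 k = g k := if_pos h
        calc g k = g2 k := e2.symm
          _ ≤ g1 k + g2 k := le_add_self
          _ ≤ g1 k + g2 k + g3 k := le_self_add
      · have e3 : g3 k = g k := if_pos h
        calc g k = g3 k := e3.symm
          _ ≤ (g1 k + g2 k) + g3 k := le_add_self
    · rw [Set.indicator_of_notMem hk]
      exact zero_le
  calc (∑' k : ℤ, S.indicator g k) ≤ ∑' k : ℤ, (g1 k + g2 k + g3 k) := Summable.tsum_le_tsum hpoint ENNReal.summable ENNReal.summable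
    _ = (∑' k : ℤ, g1 k) + (∑' k : ℤ, g2 k) + (∑' k : ℤ, g3 k) := by
        rw [ENNReal.tsum_add, ENNReal.tsum_add]
    _ ≤ ENNReal.ofReal (Hsum n/(2*n)) + ENNReal.ofReal (Hsum n/(4*n)) + ENNReal.ofReal (Hsum n/(4*n)) := by
        gcongr
        · -- middle piece
          have inj1 : Function.Injective (fun i : ℕ => (i:ℤ)+1) := by
            intro a b hab; simpa using hab
          have hsupp1 : Function.support g1 ⊆ Set.range (fun i : ℕ => (i:ℤ)+1) := by
            intro k hk
            rw [Function.mem_support] at hk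
            have hcond : 1 ≤ k ∧ k ≤ (n:ℤ)-1 := by
              by_contra h
              exact hk (if_neg h)
            refine ⟨(k-1).toNat, ?_⟩
            show ((k-1).toNat : ℤ) + 1 = k
            omega
          rw [← inj1.tsum_eq hsupp1]
          have hterm : ∀ i : ℕ, g1 ((i:ℤ)+1)
              = if i ∈ Finset.range (n-1) then ENNReal.ofReal (1/(4*((i:ℝ)+1)*((n:ℝ)-((i:ℝ)+1)))) else 0 := by
            intro i
            by_cases hi : i ∈ Finset.range (n-1)
            · have hi' : i < n - 1 := Finset.mem_range.1 hi
              rw [if_pos hi]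
              show (if 1 ≤ (i:ℤ)+1 ∧ (i:ℤ)+1 ≤ (n:ℤ)-1 then g ((i:ℤ)+1) else 0) = _
              rw [if_pos ⟨by omega, by omega⟩]
              show ENNReal.ofReal (1 / |4*(((i:ℤ)+1 : ℤ):ℝ)*((n:ℝ) - (((i:ℤ)+1 : ℤ):ℝ))|) = _
              congr 2
              have hpos : (0:ℝ) < 4*((i:ℝ)+1)*((n:ℝ)-((i:ℝ)+1)) := by
                have : (i:ℝ) + 2 ≤ (n:ℝ) := by exact_mod_cast Nat.succ_le_of_lt (by omega)
                have h1 : (0:ℝ) < (i:ℝ)+1 := by positivity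
                nlinarith
              rw [show ((((i:ℤ)+1 : ℤ)):ℝ) = (i:ℝ)+1 by push_cast; ring]
              rw [abs_of_pos hpos]
            · have hi' : ¬(i < n-1) := fun h => hi (Finset.mem_range.2 h)
              rw [if_neg hi]
              show (if 1 ≤ (i:ℤ)+1 ∧ (i:ℤ)+1 ≤ (n:ℤ)-1 then g ((i:ℤ)+1) else 0) = 0
              rw [if_neg (by omega)]
          rw [tsum_congr hterm, tsum_eq_sum (s := Finset.range (n-1)) (fun i hi => if_neg hi)]
          calc ∑ i ∈ Finset.range (n-1), (if i ∈ Finset.range (n-1) then ENNReal.ofReal (1/(4*((i:ℝ)+1)*((n:ℝ)-((i:ℝ)+1)))) else 0)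
              = ∑ i ∈ Finset.range (n-1), ENNReal.ofReal (1/(4*((i:ℝ)+1)*((n:ℝ)-((i:ℝ)+1)))) :=
                Finset.sum_congr rfl (fun i hi => if_pos hi)
            _ = ENNReal.ofReal (∑ i ∈ Finset.range (n-1), 1/(4*((i:ℝ)+1)*((n:ℝ)-((i:ℝ)+1)))) :=
                (ENNReal.ofReal_sum_of_nonneg (fun i hi => by
                  have hi' : i < n - 1 := Finset.mem_range.1 hi
                  have : (i:ℝ) + 2 ≤ (n:ℝ) := by exact_mod_cast Nat.succ_le_of_lt (by omega)
                  have h1 : (0:ℝ) < (i:ℝ)+1 := by positivity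
                  have h2 : (0:ℝ) < 4*((i:ℝ)+1)*((n:ℝ)-((i:ℝ)+1)) := by nlinarith
                  positivity)).symm
            _ ≤ _ := ENNReal.ofReal_le_ofReal (middle_sum n hn)
        · -- right tail
          have inj2 : Function.Injective (fun i : ℕ => (n:ℤ)+1+i) := by
            intro a b hab; simpa using hab
          have hsupp2 : Function.support g2 ⊆ Set.range (fun i : ℕ => (n:ℤ)+1+i) := by
            intro k hk
            rw [Function.mem_support] at hk
            have hcond : (n:ℤ)+1 ≤ k := by
              by_contra h
              exact hk (if_neg h)
            refine ⟨(k-n-1).toNat, ?_⟩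
            show (n:ℤ) + 1 + ((k-n-1).toNat : ℤ) = k
            omega
          rw [← inj2.tsum_eq hsupp2]
          have hterm : ∀ i : ℕ, g2 ((n:ℤ)+1+i) = ENNReal.ofReal (1/(4*((i:ℝ)+1)*((i:ℝ)+1+n))) := by
            intro i
            show (if (n:ℤ)+1 ≤ (n:ℤ)+1+(i:ℤ) then g ((n:ℤ)+1+(i:ℤ)) else 0) = _
            rw [if_pos (by omega)]
            show ENNReal.ofReal (1 / |4*((((n:ℤ)+1+(i:ℤ) : ℤ)):ℝ)*((n:ℝ) - ((((n:ℤ)+1+(i:ℤ) : ℤ)):ℝ))|) = _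
            congr 2
            rw [show (((((n:ℤ)+1+(i:ℤ) : ℤ))):ℝ) = (n:ℝ)+1+(i:ℝ) by push_cast; ring]
            rw [show (4*((n:ℝ)+1+(i:ℝ))*((n:ℝ) - ((n:ℝ)+1+(i:ℝ)))) = -(4*((i:ℝ)+1)*((i:ℝ)+1+n)) by ring]
            rw [abs_neg, abs_of_pos (by positivity)]
          rw [tsum_congr hterm]
          exact tail_tsum n hn
        · -- left tail
          have inj3 : Function.Injective (fun i : ℕ => -1-(i:ℤ)) := by
            intro a b hab; simpa using hab
          have hsupp3 : Function.support g3 ⊆ Set.range (fun i : ℕ => -1-(i:ℤ)) := by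
            intro k hk
            rw [Function.mem_support] at hk
            have hcond : k ≤ -1 := by
              by_contra h
              exact hk (if_neg h)
            refine ⟨(-1-k).toNat, ?_⟩
            show -1 - ((-1-k).toNat : ℤ) = k
            omega
          rw [← inj3.tsum_eq hsupp3]
          have hterm : ∀ i : ℕ, g3 (-1-(i:ℤ)) = ENNReal.ofReal (1/(4*((i:ℝ)+1)*((i:ℝ)+1+n))) := by
            intro i
            show (if -1-(i:ℤ) ≤ -1 then g (-1-(i:ℤ)) else 0) = _
            rw [if_pos (by omega)]
            show ENNReal.ofReal (1 / |4*(((-1-(i:ℤ) : ℤ)):ℝ)*((n:ℝ) - (((-1-(i:ℤ) : ℤ)):ℝ))|) = _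
            congr 2
            rw [show ((((-1-(i:ℤ) : ℤ))):ℝ) = -1-(i:ℝ) by push_cast; ring]
            rw [show (4*(-1-(i:ℝ))*((n:ℝ) - (-1-(i:ℝ)))) = -(4*((i:ℝ)+1)*((i:ℝ)+1+n)) by ring]
            rw [abs_neg, abs_of_pos (by positivity)]
          rw [tsum_congr hterm]
          exact tail_tsum n hn
    _ = ENNReal.ofReal (Hsum n/(2*n) + Hsum n/(4*n) + Hsum n/(4*n)) := by
        have e1 : 0 ≤ Hsum n/(2*n) := div_nonneg (Hsum_nonneg n) (by positivity)
        have e2 : 0 ≤ Hsum n/(4*n) := div_nonneg (Hsum_nonneg n) (by positivity)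
        rw [← ENNReal.ofReal_add e1 e2, ← ENNReal.ofReal_add (by linarith) e2]

    _ ≤ ENNReal.ofReal (2 * Real.log (6 * n) / n) := by
        apply ENNReal.ofReal_le_ofReal
        have hsum_eq : Hsum n/(2*n) + Hsum n/(4*n) + Hsum n/(4*n) = Hsum n / n := by
          field_simp
          ring
        rw [hsum_eq]
        have hlog6 : (1:ℝ) ≤ Real.log 6 := by
          rw [Real.le_log_iff_exp_le (by norm_num)]
          have := Real.exp_one_lt_d9
          linarith
        have hlogn : 0 ≤ Real.log n := Real.log_nonneg (by exact_mod_cast hn)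
        have hlogmul : Real.log (6 * n) = Real.log 6 + Real.log n :=
          Real.log_mul (by norm_num) (by positivity)
        have hH : Hsum n ≤ 2 * Real.log (6 * n) := by
          have := Hsum_le n
          rw [hlogmul]
          linarith
        gcongr

lemma ofReal_mul_le' (x y : ℝ) :
    ENNReal.ofReal (x*y) ≤ 2⁻¹ * ENNReal.ofReal (x^2) + 2⁻¹ * ENNReal.ofReal (y^2) := by
  have h1 : x*y ≤ x^2/2 + y^2/2 := by nlinarith [sq_nonneg (x-y)]
  calc ENNReal.ofReal (x*y) ≤ ENNReal.ofReal (x^2/2 + y^2/2) := ENNReal.ofReal_le_ofReal h1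
    _ = ENNReal.ofReal (x^2/2) + ENNReal.ofReal (y^2/2) :=
        ENNReal.ofReal_add (by positivity) (by positivity)
    _ = 2⁻¹ * ENNReal.ofReal (x^2) + 2⁻¹ * ENNReal.ofReal (y^2) := by
        rw [ENNReal.ofReal_div_of_pos two_pos, ENNReal.ofReal_div_of_pos two_pos]
        simp [ENNReal.div_eq_inv_mul]

/-- estimate (p16) of Lemma p3 in the Appendix:
`σ₂(n,2;m) ≤ ‖r‖² (2 log 6n)/n`, with indices in `n + 2ℤ` different from `±n`. -/
theorem sigmaTwo_estimate (r : ℤ → ℝ) (hr : ∀ k, 0 ≤ r k)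
    (hsum : Summable (fun k => (r k) ^ 2)) (n : ℕ) (hn : 1 ≤ n)
    (m : ℤ) (hm : m % 2 = (n : ℤ) % 2) :
    (∑' j2 : {j : ℤ // j % 2 = (n : ℤ) % 2 ∧ j ≠ (n : ℤ) ∧ j ≠ -(n : ℤ)},
        ENNReal.ofReal (1 / |(n : ℝ) ^ 2 - ((j2.1 : ℤ) : ℝ) ^ 2|) *
          ∑' j1 : {j : ℤ // j % 2 = (n : ℤ) % 2 ∧ j ≠ (n : ℤ) ∧ j ≠ -(n : ℤ)},
            ENNReal.ofReal (r (m + j1.1) * r (j1.1 + j2.1)))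
      ≤ ENNReal.ofReal ((∑' k : ℤ, (r k) ^ 2) * (2 * Real.log (6 * n)) / n) := by
  set A : ℝ := ∑' k : ℤ, (r k) ^ 2 with hA
  have hA0 : 0 ≤ A := tsum_nonneg (fun k => sq_nonneg _)
  have hAeq : (∑' k : ℤ, ENNReal.ofReal ((r k)^2)) = ENNReal.ofReal A :=
    (ENNReal.ofReal_tsum_of_nonneg (fun k => sq_nonneg _) hsum).symm
  -- inner sum bound
  have hinner : ∀ j2 : {j : ℤ // j % 2 = (n : ℤ) % 2 ∧ j ≠ (n : ℤ) ∧ j ≠ -(n : ℤ)},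
      (∑' j1 : {j : ℤ // j % 2 = (n : ℤ) % 2 ∧ j ≠ (n : ℤ) ∧ j ≠ -(n : ℤ)},
        ENNReal.ofReal (r (m + j1.1) * r (j1.1 + j2.1))) ≤ ENNReal.ofReal A := by
    intro j2
    have hU : (∑' j1 : {j : ℤ // j % 2 = (n : ℤ) % 2 ∧ j ≠ (n : ℤ) ∧ j ≠ -(n : ℤ)},
        ENNReal.ofReal ((r (m + j1.1))^2)) ≤ ENNReal.ofReal A := by
      rw [← hAeq]
      exact ENNReal.tsum_comp_le_tsum_of_injective
        (f := fun j1 : {j : ℤ // j % 2 = (n : ℤ) % 2 ∧ j ≠ (n : ℤ) ∧ j ≠ -(n : ℤ)} => m + j1.1)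
        (fun a b hab => Subtype.ext (add_left_cancel hab)) (fun k => ENNReal.ofReal ((r k)^2))
    have hV : (∑' j1 : {j : ℤ // j % 2 = (n : ℤ) % 2 ∧ j ≠ (n : ℤ) ∧ j ≠ -(n : ℤ)},
        ENNReal.ofReal ((r (j1.1 + j2.1))^2)) ≤ ENNReal.ofReal A := by
      rw [← hAeq]
      exact ENNReal.tsum_comp_le_tsum_of_injective
        (f := fun j1 : {j : ℤ // j % 2 = (n : ℤ) % 2 ∧ j ≠ (n : ℤ) ∧ j ≠ -(n : ℤ)} => j1.1 + j2.1)
        (fun a b hab => Subtype.ext (add_right_cancel hab)) (fun k => ENNReal.ofReal ((r k)^2))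
    calc (∑' j1 : {j : ℤ // j % 2 = (n : ℤ) % 2 ∧ j ≠ (n : ℤ) ∧ j ≠ -(n : ℤ)},
          ENNReal.ofReal (r (m + j1.1) * r (j1.1 + j2.1)))
        ≤ ∑' j1 : {j : ℤ // j % 2 = (n : ℤ) % 2 ∧ j ≠ (n : ℤ) ∧ j ≠ -(n : ℤ)},
          (2⁻¹ * ENNReal.ofReal ((r (m + j1.1))^2) + 2⁻¹ * ENNReal.ofReal ((r (j1.1 + j2.1))^2)) :=
          Summable.tsum_le_tsum (fun j1 => ofReal_mul_le' _ _) ENNReal.summable ENNReal.summable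
      _ = 2⁻¹ * (∑' j1 : {j : ℤ // j % 2 = (n : ℤ) % 2 ∧ j ≠ (n : ℤ) ∧ j ≠ -(n : ℤ)},
            ENNReal.ofReal ((r (m + j1.1))^2))
          + 2⁻¹ * (∑' j1 : {j : ℤ // j % 2 = (n : ℤ) % 2 ∧ j ≠ (n : ℤ) ∧ j ≠ -(n : ℤ)},
            ENNReal.ofReal ((r (j1.1 + j2.1))^2)) := by
          rw [ENNReal.tsum_add, ENNReal.tsum_mul_left, ENNReal.tsum_mul_left]
      _ ≤ 2⁻¹ * ENNReal.ofReal A + 2⁻¹ * ENNReal.ofReal A := by gcongr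
      _ = ENNReal.ofReal A := by
          rw [← add_mul, ENNReal.inv_two_add_inv_two, one_mul]
  calc (∑' j2 : {j : ℤ // j % 2 = (n : ℤ) % 2 ∧ j ≠ (n : ℤ) ∧ j ≠ -(n : ℤ)},
        ENNReal.ofReal (1 / |(n : ℝ) ^ 2 - ((j2.1 : ℤ) : ℝ) ^ 2|) *
          ∑' j1 : {j : ℤ // j % 2 = (n : ℤ) % 2 ∧ j ≠ (n : ℤ) ∧ j ≠ -(n : ℤ)},
            ENNReal.ofReal (r (m + j1.1) * r (j1.1 + j2.1)))
      ≤ ∑' j2 : {j : ℤ // j % 2 = (n : ℤ) % 2 ∧ j ≠ (n : ℤ) ∧ j ≠ -(n : ℤ)},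
        ENNReal.ofReal (1 / |(n : ℝ) ^ 2 - ((j2.1 : ℤ) : ℝ) ^ 2|) * ENNReal.ofReal A :=
        Summable.tsum_le_tsum (fun j2 => mul_le_mul_right (hinner j2) _) ENNReal.summable ENNReal.summable
    _ = (∑' j2 : {j : ℤ // j % 2 = (n : ℤ) % 2 ∧ j ≠ (n : ℤ) ∧ j ≠ -(n : ℤ)},
        ENNReal.ofReal (1 / |(n : ℝ) ^ 2 - ((j2.1 : ℤ) : ℝ) ^ 2|)) * ENNReal.ofReal A :=
        ENNReal.tsum_mul_right
    _ ≤ ENNReal.ofReal (2 * Real.log (6 * n) / n) * ENNReal.ofReal A :=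
        mul_le_mul_left (weight_bound n hn) _
    _ = ENNReal.ofReal (A * (2 * Real.log (6 * n)) / n) := by
        have hn0 : (1:ℝ) ≤ (n:ℝ) := by exact_mod_cast hn
        have hlog : 0 ≤ Real.log (6*n) := Real.log_nonneg (by linarith)
        rw [← ENNReal.ofReal_mul (by positivity)]
        congr 1
        ring
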